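/- Let α = a + b·i ∈ ℂ with a ≠ 0 and b ≠ 0, let z₀ ∈ ℂ \ {0}, and define z : ℝ → ℂ by z(t) = z₀ · exp((b + a·i)·t). Then: (1) z(t) ≠ 0 and Re(α · z'(t)/z(t)) = 0 for all t (so z is tangent to the kernel of the real 1-form Re(α dz/z)); (2) the set of t ∈ ℝ with z(t) ∈ ℝ₊·z₀ (i.e., z(t) a positive real multiple of z₀) is infinite; and (3) for every ε > 0 there exists t in this set with 0 < |z(t)| < ε. -/

import Mathlib

open Real Filter

/-- Focus (spiral) dynamics of the real 1-form `Re(α dz/z)` for `α = a + bi` with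
`a, b ≠ 0`: the curve `z(t) = z₀ e^{(b+ai)t}` is tangent to its kernel, crosses the
ray `ℝ₊·z₀` infinitely many times, and does so with modulus arbitrarily small. -/
theorem stmt4 (a b : ℝ) (ha : a ≠ 0) (hb : b ≠ 0) (α : ℂ)
    (hα : α = (a : ℂ) + (b : ℂ) * Complex.I)
    (z₀ : ℂ) (hz₀ : z₀ ≠ 0) (z : ℝ → ℂ)
    (hz : ∀ t : ℝ, z t = z₀ * Complex.exp (((b : ℂ) + (a : ℂ) * Complex.I) * (t : ℂ))) :
    (∀ t : ℝ, z t ≠ 0 ∧ (α * deriv z t / z t).re = 0) ∧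
    {t : ℝ | ∃ r : ℝ, 0 < r ∧ z t = (r : ℂ) * z₀}.Infinite ∧
    (∀ ε > (0:ℝ), ∃ t : ℝ, (∃ r : ℝ, 0 < r ∧ z t = (r : ℂ) * z₀) ∧
      0 < ‖z t‖ ∧ ‖z t‖ < ε) := by
  set c : ℂ := (b : ℂ) + (a : ℂ) * Complex.I with hc
  have hzfun : z = fun t : ℝ => z₀ * Complex.exp (c * t) := funext hz
  have hzne : ∀ t : ℝ, z t ≠ 0 := by
    intro t; rw [hz t]; exact mul_ne_zero hz₀ (Complex.exp_ne_zero _)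
  have hderiv : ∀ t : ℝ, deriv z t = c * z t := by
    intro t
    have h1 : HasDerivAt (fun w : ℂ => z₀ * Complex.exp (c * w))
        (z₀ * (Complex.exp (c * (t : ℂ)) * (c * 1))) (t : ℂ) :=
      (((hasDerivAt_id (t : ℂ)).const_mul c).cexp).const_mul z₀
    have h2 := h1.comp_ofReal
    rw [hzfun]
    rw [h2.deriv]
    simp only []
    ring
  -- key: value on the lattice points
  have hval : ∀ t : ℝ, z t = (Real.exp (b * t) : ℂ) * Complex.exp ((a * t : ℝ) * Complex.I) * z₀ := by
    intro t
    rw [hz t]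
    rw [show c * (t : ℂ) = ((b * t : ℝ) : ℂ) + ((a * t : ℝ) : ℂ) * Complex.I by push_cast; ring]
    rw [Complex.exp_add, Complex.ofReal_exp]
    ring
  have hmem : ∀ k : ℤ, ∃ r : ℝ, 0 < r ∧ r = Real.exp (b * (2 * π * k / a)) ∧
      z (2 * π * k / a) = (r : ℂ) * z₀ := by
    intro k
    refine ⟨Real.exp (b * (2 * π * k / a)), Real.exp_pos _, rfl, ?_⟩
    rw [hval]
    have h3 : (a * (2 * π * k / a) : ℝ) = 2 * π * k := by field_simp
    have : ((a * (2 * π * k / a) : ℝ) : ℂ) * Complex.I = (k : ℂ) * (2 * π * Complex.I) := by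
      rw [h3]; push_cast; ring
    rw [this, Complex.exp_int_mul_two_pi_mul_I, mul_one]
  refine ⟨?_, ?_, ?_⟩
  · intro t
    refine ⟨hzne t, ?_⟩
    rw [hderiv t, hα, hc]
    have : ((a : ℂ) + (b : ℂ) * Complex.I) * (((b : ℂ) + (a : ℂ) * Complex.I) * z t) / z t
        = ((a : ℂ) + (b : ℂ) * Complex.I) * ((b : ℂ) + (a : ℂ) * Complex.I) := by
      rw [mul_div_assoc, mul_div_assoc, div_self (hzne t), mul_one]
    rw [this]
    have h4 : ((a : ℂ) + (b : ℂ) * Complex.I) * ((b : ℂ) + (a : ℂ) * Complex.I)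
        = ((a ^ 2 + b ^ 2 : ℝ) : ℂ) * Complex.I := by
      have : Complex.I * Complex.I = -1 := Complex.I_mul_I
      push_cast
      linear_combination ((a : ℂ) * (b : ℂ)) * this + this * 0
    rw [h4, Complex.mul_re, Complex.I_re, Complex.I_im, Complex.ofReal_re, Complex.ofReal_im]
    ring
  · refine Set.infinite_of_injective_forall_mem (f := fun n : ℕ => 2 * π * n / a) ?_ ?_
    · intro m n hmn
      simp only at hmn
      field_simp [ha, Real.pi_ne_zero] at hmn
      exact_mod_cast hmn
    · intro n
      obtain ⟨r, hr, -, hzr⟩ := hmem n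
      exact ⟨r, hr, by exact_mod_cast hzr⟩
  · intro ε hε
    -- choose k with b * (2πk/a) → -∞
    have habs : ∀ k : ℤ, ‖z (2 * π * k / a)‖ =
        Real.exp (b * (2 * π * k / a)) * ‖z₀‖ := by
      intro k
      obtain ⟨r, hr, hrdef, hzr⟩ := hmem k
      rw [hzr, norm_mul, Complex.norm_real, Real.norm_eq_abs, abs_of_pos hr, hrdef]
    have hz₀pos : 0 < ‖z₀‖ := norm_pos_iff.mpr hz₀
    -- find k with exp small
    have htend : Tendsto (fun n : ℕ => Real.exp (-(2 * π * |b / a|) * n) * ‖z₀‖)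
        atTop (nhds 0) := by
      have h1 : Tendsto (fun n : ℕ => -(2 * π * |b / a|) * n) atTop atBot := by
        apply Tendsto.comp (g := fun x : ℝ => -(2 * π * |b / a|) * x)
        · apply tendsto_id.const_mul_atTop_of_neg
          have : 0 < |b / a| := abs_pos.mpr (div_ne_zero hb ha)
          nlinarith [Real.pi_pos]
        · exact tendsto_natCast_atTop_atTop
      simpa using (Real.tendsto_exp_atBot.comp h1).mul_const (‖z₀‖)
    obtain ⟨n, hn⟩ := (htend.eventually (eventually_lt_nhds hε)).exists
    -- pick k := -sign(b/a) * n so that b*(2πk/a) = -2π |b/a| n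
    set k : ℤ := if 0 < b / a then -(n : ℤ) else (n : ℤ) with hk
    have hgen : ∀ m : ℤ, b * (2 * π * m / a) = 2 * π * (b / a) * m := by
      intro m; field_simp
    have hkey : b * (2 * π * k / a) = -(2 * π * |b / a|) * n := by
      rw [hgen]
      rcases lt_or_gt_of_ne (div_ne_zero hb ha) with hneg | hpos
      · have hkn : k = (n : ℤ) := by rw [hk, if_neg (by linarith)]
        rw [hkn, abs_of_neg hneg]; push_cast; ring
      · have hkn : k = -(n : ℤ) := by rw [hk, if_pos hpos]
        rw [hkn, abs_of_pos hpos]; push_cast; ring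
    refine ⟨2 * π * k / a, ?_, ?_, ?_⟩
    · obtain ⟨r, hr, -, hzr⟩ := hmem k; exact ⟨r, hr, hzr⟩
    · exact (norm_pos_iff.mpr (hzne _))
    · rw [habs k, hkey]; exact hn
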